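/- (Concentration in a well.) Let c be a coefficient, let 0 ≤ α < β < H and c₁ ∈ (c_m, c_M] with c(y) ≥ c₁ for a.e. y ∈ (0,H) \ (α,β), and fix ε > 0. Let (μ_n)_{n≥1} be positive reals and (λ_n)_{n≥1} satisfy c_m μ_n² ≤ λ_n ≤ (c₁ − ε)μ_n² for all n and λ_n → ∞, and for each n let u_n be a normalized Dirichlet solution of the reduced problem with parameters (μ_n, λ_n). Then for every closed interval [a,b] ⊆ [0,H] with [a,b] ∩ [α,β] = ∅ one has lim_{n→∞} ∫_a^b u_n(y)² dy = 0. -/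

import Mathlib

open MeasureTheory Set Filter Topology

set_option maxHeartbeats 2000000

noncomputable section

/-- `u` (with flux `v = c·u'` and weak derivative `g = u'`) is a solution of the reduced
problem `(c u')' + (λ - c μ²) u = 0` on the interval `[a, b]`:
`u` is absolutely continuous with derivative `g ∈ L²`, the flux `v` agrees a.e. with `c·g`,
and `v` is absolutely continuous with derivative `(c μ² - λ)·u`. -/
def IsReducedSolutionOn (a b : ℝ) (c : ℝ → ℝ) (μ lam : ℝ) (u v g : ℝ → ℝ) : Prop :=
  IntervalIntegrable g volume a b ∧
  IntervalIntegrable (fun t => g t ^ 2) volume a b ∧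
  (∀ y ∈ Set.Icc a b, u y = u a + ∫ t in a..y, g t) ∧
  (∀ᵐ y ∂volume.restrict (Set.Ioo a b), v y = c y * g y) ∧
  IntervalIntegrable (fun t => (c t * μ ^ 2 - lam) * u t) volume a b ∧
  (∀ y ∈ Set.Icc a b, v y = v a + ∫ t in a..y, (c t * μ ^ 2 - lam) * u t)

/-- A coefficient on `[0, H]`: measurable and bounded between `cm` and `cM`. -/
def IsCoeff (H cm cM : ℝ) (c : ℝ → ℝ) : Prop :=
  Measurable c ∧ ∀ y ∈ Set.Icc (0 : ℝ) H, cm ≤ c y ∧ c y ≤ cM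

/-- Fubini for the product of two primitives: splitting the square into two triangles. -/
lemma prim_mul_aux (f h : ℝ → ℝ) {x y : ℝ}
    (hf : IntegrableOn f (Set.Ioc x y)) (hh : IntegrableOn h (Set.Ioc x y)) :
    (∫ s in Set.Ioc x y, f s) * (∫ t in Set.Ioc x y, h t)
      = (∫ s in Set.Ioc x y, f s * ∫ t in Set.Ioc x s, h t)
        + ∫ t in Set.Ioc x y, h t * ∫ s in Set.Ioc x t, f s := by
  set μ := volume.restrict (Set.Ioc x y) with hμ
  have hfμ : Integrable f μ := hf
  have hhμ : Integrable h μ := hh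
  have hprod : Integrable (fun z : ℝ × ℝ => f z.1 * h z.2) (μ.prod μ) := hfμ.mul_prod hhμ
  have hmeas : MeasurableSet {z : ℝ × ℝ | z.2 ≤ z.1} :=
    measurableSet_le measurable_snd measurable_fst
  have hmeas' : MeasurableSet {z : ℝ × ℝ | z.1 < z.2} :=
    measurableSet_lt measurable_fst measurable_snd
  have h1 : Integrable ({z : ℝ × ℝ | z.2 ≤ z.1}.indicator
      (fun z : ℝ × ℝ => f z.1 * h z.2)) (μ.prod μ) := hprod.indicator hmeas
  have h2 : Integrable ({z : ℝ × ℝ | z.1 < z.2}.indicator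
      (fun z : ℝ × ℝ => f z.1 * h z.2)) (μ.prod μ) := hprod.indicator hmeas'
  have hsplit : (fun z : ℝ × ℝ => f z.1 * h z.2)
      = ({z : ℝ × ℝ | z.2 ≤ z.1}.indicator (fun z : ℝ × ℝ => f z.1 * h z.2))
        + ({z : ℝ × ℝ | z.1 < z.2}.indicator (fun z : ℝ × ℝ => f z.1 * h z.2)) := by
    funext z
    by_cases hz : z.2 ≤ z.1
    · have h1m : z ∈ {z : ℝ × ℝ | z.2 ≤ z.1} := hz
      have h2m : z ∉ {z : ℝ × ℝ | z.1 < z.2} := not_lt.2 hz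
      rw [Pi.add_apply, Set.indicator_of_mem h1m, Set.indicator_of_notMem h2m]; ring
    · have h1m : z ∉ {z : ℝ × ℝ | z.2 ≤ z.1} := hz
      have h2m : z ∈ {z : ℝ × ℝ | z.1 < z.2} := lt_of_not_ge hz
      rw [Pi.add_apply, Set.indicator_of_notMem h1m, Set.indicator_of_mem h2m]; ring
  have key : (∫ s, f s ∂μ) * (∫ t, h t ∂μ)
      = (∫ z, ({z : ℝ × ℝ | z.2 ≤ z.1}.indicator (fun z : ℝ × ℝ => f z.1 * h z.2)) z ∂μ.prod μ)
        + ∫ z, ({z : ℝ × ℝ | z.1 < z.2}.indicator (fun z : ℝ × ℝ => f z.1 * h z.2)) z ∂μ.prod μ := by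
    rw [← integral_prod_mul f h, ← integral_add' h1 h2, ← hsplit]
  rw [key]
  congr 1
  · -- first triangle: integrate in t first
    rw [integral_prod _ h1]
    refine integral_congr_ae ?_
    filter_upwards [ae_restrict_mem measurableSet_Ioc] with s hs
    have : (fun t => ({z : ℝ × ℝ | z.2 ≤ z.1}.indicator (fun z : ℝ × ℝ => f z.1 * h z.2)) (s, t))
        = (Set.Iic s).indicator (fun t => f s * h t) := by
      funext t
      by_cases ht : t ≤ s
      · simp [Set.indicator_of_mem, ht]
      · simp [Set.indicator_of_notMem, ht]
    rw [this, integral_indicator measurableSet_Iic, hμ,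
      Measure.restrict_restrict measurableSet_Iic]
    have hset : Set.Iic s ∩ Set.Ioc x y = Set.Ioc x s := by
      ext t
      simp only [Set.mem_inter_iff, Set.mem_Iic, Set.mem_Ioc]
      constructor
      · rintro ⟨h1, h2, h3⟩; exact ⟨h2, h1⟩
      · rintro ⟨h1, h2⟩; exact ⟨h2, h1, h2.trans hs.2⟩
    rw [hset, integral_const_mul]
  · -- second triangle: integrate in s first
    rw [integral_prod_symm _ h2]
    refine integral_congr_ae ?_
    filter_upwards [ae_restrict_mem measurableSet_Ioc] with t ht
    have : (fun s => ({z : ℝ × ℝ | z.1 < z.2}.indicator (fun z : ℝ × ℝ => f z.1 * h z.2)) (s, t))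
        = (Set.Iio t).indicator (fun s => f s * h t) := by
      funext s
      by_cases hst : s < t
      · simp [Set.indicator_of_mem, hst]
      · simp [Set.indicator_of_notMem, hst]
    rw [this, integral_indicator measurableSet_Iio, hμ,
      Measure.restrict_restrict measurableSet_Iio]
    have hset : Set.Iio t ∩ Set.Ioc x y = Set.Ioo x t := by
      ext s
      simp only [Set.mem_inter_iff, Set.mem_Iio, Set.mem_Ioc]
      constructor
      · rintro ⟨h1, h2, h3⟩; exact ⟨h2, h1⟩
      · rintro ⟨h1, h2⟩; exact ⟨h2, h1, h2.le.trans ht.2⟩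
    rw [hset]
    have : ∫ s in Set.Ioo x t, f s * h t = ∫ s in Set.Ioc x t, f s * h t := by
      rw [← integral_Ioc_eq_integral_Ioo]
    rw [this]
    rw [show (fun s => f s * h t) = fun s => h t * f s from funext fun s => mul_comm _ _,
      integral_const_mul]

/-- product of an integrable function with an a.e.-bounded a.e.-strongly-measurable one. -/
lemma integrableOn_mul_bdd {f w : ℝ → ℝ} {s : Set ℝ} (hf : IntegrableOn f s volume)
    (hw : AEStronglyMeasurable w (volume.restrict s)) {C : ℝ}
    (hC : ∀ᵐ x ∂volume.restrict s, |w x| ≤ C) :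
    IntegrableOn (fun x => f x * w x) s volume := by
  have := hf.bdd_mul (c := C) hw (by simpa [Real.norm_eq_abs] using hC)
  simpa [mul_comm, IntegrableOn] using this

lemma key_bound (cm cM H : ℝ) (hcm : 0 < cm) (hH : 0 < H)
    (c : ℝ → ℝ) (hc : IsCoeff H cm cM c)
    (α β c₁ : ℝ) (hα : 0 ≤ α) (hαβ : α < β) (hβ : β < H)
    (hwell : ∀ᵐ y ∂volume.restrict (Set.Ioo 0 H \ Set.Ioo α β), c₁ ≤ c y)
    (ε : ℝ) (hε : 0 < ε) (μ lam : ℝ) (hμ : 0 < μ)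
    (hlow : cm * μ ^ 2 ≤ lam) (hhigh : lam ≤ (c₁ - ε) * μ ^ 2)
    (u v g : ℝ → ℝ) (hsol : IsReducedSolutionOn 0 H c μ lam u v g)
    (hu0 : u 0 = 0) (huH : u H = 0)
    (hnorm : (∫ y in (0:ℝ)..H, u y ^ 2) = 1)
    (a b d : ℝ) (ha : 0 ≤ a) (hab : a ≤ b) (hbH : b ≤ H) (hd : 0 < d)
    (hcase : b + d ≤ α ∨ β + d ≤ a) :
    ∫ y in a..b, u y ^ 2 ≤ cM * Real.sqrt lam * (1 + 1 / cm) / (2 * d * ε * μ ^ 2) := by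
  obtain ⟨hgII, hg2II, hurep, hvae, hhII, hvrep⟩ := hsol
  obtain ⟨hcmeas, hcbd⟩ := hc
  have h0H : (0:ℝ) ≤ H := hH.le
  set q : ℝ → ℝ := fun t => c t * μ ^ 2 - lam with hq
  set h : ℝ → ℝ := fun t => q t * u t with hhdef
  set U : ℝ → ℝ := fun y => ∫ t in (0:ℝ)..y, g t with hU
  set W : ℝ → ℝ := fun y => v 0 + ∫ t in (0:ℝ)..y, h t with hW
  have hgI : IntegrableOn g (Set.Ioc 0 H) volume :=
    (intervalIntegrable_iff_integrableOn_Ioc_of_le h0H).1 hgII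
  have hg2I : IntegrableOn (fun t => g t ^ 2) (Set.Ioc 0 H) volume :=
    (intervalIntegrable_iff_integrableOn_Ioc_of_le h0H).1 hg2II
  have hhI : IntegrableOn h (Set.Ioc 0 H) volume :=
    (intervalIntegrable_iff_integrableOn_Ioc_of_le h0H).1 hhII
  have huU : ∀ y ∈ Set.Icc (0:ℝ) H, u y = U y := by
    intro y hy; rw [hurep y hy, hu0]; simp [hU]
  have hvW : ∀ y ∈ Set.Icc (0:ℝ) H, v y = W y := fun y hy => hvrep y hy
  have hU0 : U 0 = 0 := by simp [hU]
  have hUH : U H = 0 := by rw [← huU H ⟨h0H, le_refl H⟩]; exact huH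
  -- continuity of U and W on [0, H]
  have hgIcc : IntegrableOn g (Set.Icc 0 H) volume :=
    (integrableOn_Icc_iff_integrableOn_Ioc).2 hgI
  have hhIcc : IntegrableOn h (Set.Icc 0 H) volume :=
    (integrableOn_Icc_iff_integrableOn_Ioc).2 hhI
  have hUcont : ContinuousOn U (Set.Icc 0 H) := by
    have huicc : Set.uIcc (0:ℝ) H = Set.Icc 0 H := Set.uIcc_of_le h0H
    have := intervalIntegral.continuousOn_primitive_interval (μ := volume) (huicc ▸ hgIcc)
    rw [huicc] at this
    exact this
  have hWcont : ContinuousOn W (Set.Icc 0 H) := by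
    have huicc : Set.uIcc (0:ℝ) H = Set.Icc 0 H := Set.uIcc_of_le h0H
    have := intervalIntegral.continuousOn_primitive_interval (μ := volume) (huicc ▸ hhIcc)
    rw [huicc] at this
    exact continuousOn_const.add this
  -- bounds for U and W on [0, H]
  obtain ⟨CU, hCU⟩ := (isCompact_Icc (a := (0:ℝ)) (b := H)).exists_bound_of_continuousOn hUcont
  obtain ⟨CW, hCW⟩ := (isCompact_Icc (a := (0:ℝ)) (b := H)).exists_bound_of_continuousOn hWcont
  -- a.e. flux identification on subintervals
  have haeq : ∀ x y : ℝ, 0 ≤ x → y ≤ H →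
      (∀ᵐ s ∂volume.restrict (Set.Ioc x y), v s = c s * g s) := by
    intro x y hx hy
    have hsub : Set.Ioo x y ⊆ Set.Ioo 0 H := Set.Ioo_subset_Ioo hx hy
    have h1 : ∀ᵐ s ∂volume.restrict (Set.Ioo x y), v s = c s * g s :=
      ae_restrict_of_ae_restrict_of_subset hsub hvae
    rwa [Measure.restrict_congr_set Ioo_ae_eq_Ioc] at h1
  -- a.e. lower bound for q on subintervals avoiding the well
  have hq_ae : ∀ x y : ℝ, 0 ≤ x → y ≤ H → Set.Ioo x y ∩ Set.Ioo α β = ∅ →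
      (∀ᵐ s ∂volume.restrict (Set.Ioc x y), ε * μ ^ 2 ≤ q s) := by
    intro x y hx hy hdisj
    have hsub : Set.Ioo x y ⊆ Set.Ioo 0 H \ Set.Ioo α β := by
      intro s hs
      refine ⟨Set.Ioo_subset_Ioo hx hy hs, fun hmem => ?_⟩
      exact absurd (Set.mem_inter hs hmem) (by rw [hdisj]; exact Set.notMem_empty s)
    have h1 : ∀ᵐ s ∂volume.restrict (Set.Ioo x y), c₁ ≤ c s :=
      ae_restrict_of_ae_restrict_of_subset hsub hwell
    have h2 : ∀ᵐ s ∂volume.restrict (Set.Ioc x y), c₁ ≤ c s := by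
      rwa [Measure.restrict_congr_set Ioo_ae_eq_Ioc] at h1
    filter_upwards [h2] with s hs
    have : c₁ * μ ^ 2 ≤ c s * μ ^ 2 := by nlinarith [sq_nonneg μ]
    simp only [hq]
    nlinarith
  -- interval integrability on subintervals of [0, H]
  have hmono : ∀ {f : ℝ → ℝ}, IntervalIntegrable f volume 0 H → ∀ {p r : ℝ}, 0 ≤ p → p ≤ r →
      r ≤ H → IntervalIntegrable f volume p r := by
    intro f hf p r hp hpr hrH
    apply hf.mono_set
    exact Set.uIcc_subset_uIcc (by rw [Set.uIcc_of_le h0H]; exact ⟨hp, hpr.trans hrH⟩)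
      (by rw [Set.uIcc_of_le h0H]; exact ⟨hp.trans hpr, hrH⟩)
  have hUdiff : ∀ {p r : ℝ}, 0 ≤ p → p ≤ r → r ≤ H → U r - U p = ∫ s in Set.Ioc p r, g s := by
    intro p r hp hpr hrH
    have h1 : (∫ t in (0:ℝ)..p, g t) + ∫ t in p..r, g t = ∫ t in (0:ℝ)..r, g t :=
      intervalIntegral.integral_add_adjacent_intervals (hmono hgII le_rfl hp (hpr.trans hrH))
        (hmono hgII hp hpr hrH)
    have h2 : (∫ t in p..r, g t) = ∫ s in Set.Ioc p r, g s := intervalIntegral.integral_of_le hpr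
    simp only [hU]
    linarith
  have hWdiff : ∀ {p r : ℝ}, 0 ≤ p → p ≤ r → r ≤ H → W r - W p = ∫ s in Set.Ioc p r, h s := by
    intro p r hp hpr hrH
    have h1 : (∫ t in (0:ℝ)..p, h t) + ∫ t in p..r, h t = ∫ t in (0:ℝ)..r, h t :=
      intervalIntegral.integral_add_adjacent_intervals (hmono hhII le_rfl hp (hpr.trans hrH))
        (hmono hhII hp hpr hrH)
    have h2 : (∫ t in p..r, h t) = ∫ s in Set.Ioc p r, h s := intervalIntegral.integral_of_le hpr
    simp only [hW]
    linarith
  -- the integration-by-parts (Green) identity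
  have hP : ∀ x y : ℝ, 0 ≤ x → x ≤ y → y ≤ H →
      U y * W y - U x * W x = ∫ s in Set.Ioc x y, (g s * W s + h s * U s) := by
    intro x y hx hxy hyH
    have hIoc : Set.Ioc x y ⊆ Set.Ioc 0 H := Set.Ioc_subset_Ioc hx hyH
    have hgxy : IntegrableOn g (Set.Ioc x y) volume := hgI.mono_set hIoc
    have hhxy : IntegrableOn h (Set.Ioc x y) volume := hhI.mono_set hIoc
    set Pg : ℝ → ℝ := fun z => ∫ t in Set.Ioc x z, g t with hPg
    set Ph : ℝ → ℝ := fun z => ∫ t in Set.Ioc x z, h t with hPh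
    have hPgc : ContinuousOn Pg (Set.Icc x y) :=
      intervalIntegral.continuousOn_primitive ((integrableOn_Icc_iff_integrableOn_Ioc).2 hgxy)
    have hPhc : ContinuousOn Ph (Set.Icc x y) :=
      intervalIntegral.continuousOn_primitive ((integrableOn_Icc_iff_integrableOn_Ioc).2 hhxy)
    obtain ⟨Cg, hCg⟩ := (isCompact_Icc (a := x) (b := y)).exists_bound_of_continuousOn hPgc
    obtain ⟨Ch, hCh⟩ := (isCompact_Icc (a := x) (b := y)).exists_bound_of_continuousOn hPhc
    have hPgm : AEStronglyMeasurable Pg (volume.restrict (Set.Ioc x y)) :=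
      (hPgc.mono Set.Ioc_subset_Icc_self).aestronglyMeasurable measurableSet_Ioc
    have hPhm : AEStronglyMeasurable Ph (volume.restrict (Set.Ioc x y)) :=
      (hPhc.mono Set.Ioc_subset_Icc_self).aestronglyMeasurable measurableSet_Ioc
    have hi2 : IntegrableOn (fun s => g s * Ph s) (Set.Ioc x y) volume := by
      refine integrableOn_mul_bdd hgxy hPhm (C := Ch) ?_
      filter_upwards [ae_restrict_mem measurableSet_Ioc] with s hs
      simpa [Real.norm_eq_abs] using hCh s (Set.Ioc_subset_Icc_self hs)
    have hi4 : IntegrableOn (fun s => h s * Pg s) (Set.Ioc x y) volume := by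
      refine integrableOn_mul_bdd hhxy hPgm (C := Cg) ?_
      filter_upwards [ae_restrict_mem measurableSet_Ioc] with s hs
      simpa [Real.norm_eq_abs] using hCg s (Set.Ioc_subset_Icc_self hs)
    have hi1 : IntegrableOn (fun s => g s * W x) (Set.Ioc x y) volume := hgxy.mul_const _
    have hi3 : IntegrableOn (fun s => h s * U x) (Set.Ioc x y) volume := hhxy.mul_const _
    set A := ∫ s in Set.Ioc x y, g s with hA
    set B := ∫ s in Set.Ioc x y, h s with hB
    have hUyx : U y = U x + A := by have := hUdiff hx hxy hyH; linarith
    have hWyx : W y = W x + B := by have := hWdiff hx hxy hyH; linarith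
    have hcongr : (∫ s in Set.Ioc x y, (g s * W s + h s * U s))
        = ∫ s in Set.Ioc x y, ((g s * W x + g s * Ph s) + (h s * U x + h s * Pg s)) := by
      refine setIntegral_congr_fun measurableSet_Ioc (fun s hs => ?_)
      have h1 : W s = W x + Ph s := by
        have := hWdiff hx hs.1.le (hs.2.trans hyH); simp only [hPh]; linarith
      have h2 : U s = U x + Pg s := by
        have := hUdiff hx hs.1.le (hs.2.trans hyH); simp only [hPg]; linarith
      rw [h1, h2]; ring
    have hsplit : (∫ s in Set.Ioc x y, ((g s * W x + g s * Ph s) + (h s * U x + h s * Pg s)))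
        = ((∫ s in Set.Ioc x y, g s * W x) + ∫ s in Set.Ioc x y, g s * Ph s)
          + ((∫ s in Set.Ioc x y, h s * U x) + ∫ s in Set.Ioc x y, h s * Pg s) := by
      have e3 := integral_add (hi1.add hi2) (hi3.add hi4)
      have e1 := integral_add hi1 hi2
      have e2 := integral_add hi3 hi4
      simp only [Pi.add_apply] at e3
      rw [e3, e1, e2]
    have hm1 : (∫ s in Set.Ioc x y, g s * W x) = A * W x := by rw [integral_mul_const]
    have hm3 : (∫ s in Set.Ioc x y, h s * U x) = B * U x := by rw [integral_mul_const]
    have hfub := prim_mul_aux g h hgxy hhxy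
    rw [hcongr, hsplit, hm1, hm3, hUyx, hWyx]
    simp only [hPg, hPh]
    rw [← hA, ← hB] at hfub
    linear_combination hfub
  -- integrability of the energy densities on (0, H]
  have hcabs : ∀ᵐ s ∂volume.restrict (Set.Ioc (0:ℝ) H), ‖c s‖ ≤ cM := by
    filter_upwards [ae_restrict_mem measurableSet_Ioc] with s hs
    have := hcbd s (Set.Ioc_subset_Icc_self hs)
    rw [Real.norm_eq_abs, abs_of_nonneg (by linarith)]
    exact this.2
  have hcgI : IntegrableOn (fun s => c s * g s ^ 2) (Set.Ioc 0 H) volume :=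
    hg2I.bdd_mul (hcmeas.aestronglyMeasurable.restrict) hcabs
  have hcg1I : IntegrableOn (fun s => c s * g s) (Set.Ioc 0 H) volume :=
    hgI.bdd_mul (hcmeas.aestronglyMeasurable.restrict) hcabs
  have hUmeas : AEStronglyMeasurable U (volume.restrict (Set.Ioc 0 H)) :=
    (hUcont.mono Set.Ioc_subset_Icc_self).aestronglyMeasurable measurableSet_Ioc
  have hUbd : ∀ᵐ s ∂volume.restrict (Set.Ioc (0:ℝ) H), |U s| ≤ CU := by
    filter_upwards [ae_restrict_mem measurableSet_Ioc] with s hs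
    simpa [Real.norm_eq_abs] using hCU s (Set.Ioc_subset_Icc_self hs)
  have hhUI : IntegrableOn (fun s => h s * U s) (Set.Ioc 0 H) volume :=
    integrableOn_mul_bdd hhI hUmeas hUbd
  have hcgUI : IntegrableOn (fun s => c s * g s * U s) (Set.Ioc 0 H) volume :=
    integrableOn_mul_bdd hcg1I hUmeas hUbd
  have hqU2I : IntegrableOn (fun s => q s * U s ^ 2) (Set.Ioc 0 H) volume := by
    refine hhUI.congr_fun (fun s hs => ?_) measurableSet_Ioc
    have := huU s (Set.Ioc_subset_Icc_self hs)
    simp only [hhdef]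
    rw [this]; ring
  have hU2I : IntegrableOn (fun s => U s ^ 2) (Set.Ioc 0 H) volume :=
    ((hUcont.pow 2).integrableOn_Icc).mono_set Set.Ioc_subset_Icc_self
  -- refined Green identity
  have hP' : ∀ x y : ℝ, 0 ≤ x → x ≤ y → y ≤ H →
      U y * W y - U x * W x
        = ∫ s in Set.Ioc x y, (c s * g s ^ 2 + q s * U s ^ 2) := by
    intro x y hx hxy hyH
    rw [hP x y hx hxy hyH]
    refine integral_congr_ae ?_
    filter_upwards [haeq x y hx hyH, ae_restrict_mem measurableSet_Ioc] with s hvs hs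
    have hsIcc : s ∈ Set.Icc (0:ℝ) H := ⟨hx.trans hs.1.le, hs.2.trans hyH⟩
    have h1 : W s = c s * g s := by rw [← hvW s hsIcc]; exact hvs
    have h2 : u s = U s := huU s hsIcc
    simp only [hhdef]
    rw [h1, h2]; ring
  -- normalization in terms of U
  have hnormU : ∫ s in Set.Ioc (0:ℝ) H, U s ^ 2 = 1 := by
    have e : ∫ s in Set.Ioc (0:ℝ) H, U s ^ 2 = ∫ y in (0:ℝ)..H, u y ^ 2 := by
      rw [intervalIntegral.integral_of_le h0H]
      exact setIntegral_congr_fun measurableSet_Ioc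
        (fun s hs => by rw [huU s (Set.Ioc_subset_Icc_self hs)])
    rw [e, hnorm]
  -- total energy identity
  have hE0 : ∫ s in Set.Ioc (0:ℝ) H, (c s * g s ^ 2 + q s * U s ^ 2) = 0 := by
    have := hP' 0 H le_rfl h0H le_rfl
    rw [hU0, hUH] at this
    simpa using this.symm
  have hEsplit : (∫ s in Set.Ioc (0:ℝ) H, c s * g s ^ 2)
      + ∫ s in Set.Ioc (0:ℝ) H, q s * U s ^ 2 = 0 := by
    rw [← integral_add hcgI hqU2I]; exact hE0
  -- energy bounds
  have hlam_pos : 0 < lam := lt_of_lt_of_le (by positivity) hlow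
  have hcg_le : ∫ s in Set.Ioc (0:ℝ) H, c s * g s ^ 2 ≤ lam := by
    have e1 : ∫ s in Set.Ioc (0:ℝ) H, c s * g s ^ 2
        = ∫ s in Set.Ioc (0:ℝ) H, (-(q s * U s ^ 2)) := by
      rw [integral_neg]; linarith
    have e2 : ∫ s in Set.Ioc (0:ℝ) H, (-(q s * U s ^ 2))
        ≤ ∫ s in Set.Ioc (0:ℝ) H, lam * U s ^ 2 := by
      refine setIntegral_mono_on hqU2I.neg (hU2I.const_mul lam) measurableSet_Ioc
        (fun s hs => ?_)
      have hcs := hcbd s (Set.Ioc_subset_Icc_self hs)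
      simp only [hq]
      nlinarith [sq_nonneg (U s), sq_nonneg μ, mul_nonneg (mul_nonneg (hcm.le.trans hcs.1) (sq_nonneg μ)) (sq_nonneg (U s))]
    have e3 : ∫ s in Set.Ioc (0:ℝ) H, lam * U s ^ 2 = lam := by
      rw [integral_const_mul, hnormU, mul_one]
    linarith
  have hg2_le : ∫ s in Set.Ioc (0:ℝ) H, g s ^ 2 ≤ lam / cm := by
    have e1 : ∫ s in Set.Ioc (0:ℝ) H, cm * g s ^ 2 ≤ ∫ s in Set.Ioc (0:ℝ) H, c s * g s ^ 2 := by
      refine setIntegral_mono_on (hg2I.const_mul cm) hcgI measurableSet_Ioc (fun s hs => ?_)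
      have hcs := hcbd s (Set.Ioc_subset_Icc_self hs)
      nlinarith [sq_nonneg (g s)]
    rw [integral_const_mul] at e1
    rw [le_div_iff₀ hcm]
    nlinarith
  -- the off-diagonal bound
  set t := Real.sqrt lam with htdef
  have ht : 0 < t := Real.sqrt_pos.2 hlam_pos
  have ht2 : t ^ 2 = lam := Real.sq_sqrt hlam_pos.le
  have hcM0 : 0 < cM :=
    hcm.trans_le ((hcbd 0 ⟨le_rfl, h0H⟩).1.trans (hcbd 0 ⟨le_rfl, h0H⟩).2)
  set K := cM / (2 * t) with hK
  have hK0 : 0 < K := by positivity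
  have hK2 : 2 * t * K = cM := by rw [hK]; field_simp [ht.ne']
  set M := cM * t * (1 + 1 / cm) / 2 with hM
  have habsI : IntegrableOn (fun s => |c s * g s * U s|) (Set.Ioc 0 H) volume := hcgUI.abs
  have hJ : ∫ s in Set.Ioc (0:ℝ) H, |c s * g s * U s| ≤ M := by
    have e1 : ∫ s in Set.Ioc (0:ℝ) H, |c s * g s * U s|
        ≤ ∫ s in Set.Ioc (0:ℝ) H, K * (t ^ 2 * U s ^ 2 + g s ^ 2) := by
      refine setIntegral_mono_on habsI
        (((hU2I.const_mul _).add hg2I).const_mul K) measurableSet_Ioc (fun s hs => ?_)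
      have hcs := hcbd s (Set.Ioc_subset_Icc_self hs)
      have h1 : |c s * g s * U s| = c s * |g s * U s| := by
        rw [mul_assoc, abs_mul, abs_of_nonneg (by linarith : (0:ℝ) ≤ c s)]
      have h2 : 2 * t * |g s * U s| ≤ t ^ 2 * U s ^ 2 + g s ^ 2 := by
        nlinarith [sq_nonneg (t * |U s| - |g s|), abs_mul (g s) (U s), sq_abs (U s),
          sq_abs (g s), abs_nonneg (U s), abs_nonneg (g s)]
      have h3 : c s * |g s * U s| ≤ cM * |g s * U s| := by
        have := abs_nonneg (g s * U s); nlinarith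
      rw [h1]
      calc c s * |g s * U s| ≤ cM * |g s * U s| := h3
        _ = K * (2 * t * |g s * U s|) := by rw [← hK2]; ring
        _ ≤ K * (t ^ 2 * U s ^ 2 + g s ^ 2) := by nlinarith [hK0.le, h2]
    have e2 : ∫ s in Set.Ioc (0:ℝ) H, K * (t ^ 2 * U s ^ 2 + g s ^ 2)
        = K * (t ^ 2 * (∫ s in Set.Ioc (0:ℝ) H, U s ^ 2) + ∫ s in Set.Ioc (0:ℝ) H, g s ^ 2) := by
      rw [integral_const_mul, integral_add (hU2I.const_mul _) hg2I, integral_const_mul]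
    have e3 : K * (t ^ 2 * (∫ s in Set.Ioc (0:ℝ) H, U s ^ 2) + ∫ s in Set.Ioc (0:ℝ) H, g s ^ 2)
        ≤ K * (lam + lam / cm) := by
      rw [hnormU, mul_one, ht2]
      nlinarith [hK0.le, hg2_le]
    have e4 : K * (lam + lam / cm) = M := by
      rw [hK, hM, ← ht2]
      field_simp
    linarith
  -- common preparations for both cases
  have hFI : IntegrableOn (fun s => c s * g s ^ 2 + q s * U s ^ 2) (Set.Ioc 0 H) volume :=
    hcgI.add hqU2I
  have hb0 : (0:ℝ) ≤ b := ha.trans hab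
  have haH : a ≤ H := hab.trans hbH
  have hαH : α ≤ H := (hαβ.trans hβ).le
  have hεμ : (0:ℝ) < ε * μ ^ 2 := by positivity
  have hUWcont : ContinuousOn (fun z => U z * W z) (Set.Icc 0 H) := hUcont.mul hWcont
  have hUWI : ∀ {p r : ℝ}, 0 ≤ p → r ≤ H →
      IntegrableOn (fun z => U z * W z) (Set.Ioc p r) volume := by
    intro p r hp hr
    by_cases hpr : p ≤ r
    · exact ((hUWcont.mono (Set.Icc_subset_Icc hp hr)).integrableOn_Icc).mono_set
        Set.Ioc_subset_Icc_self
    · rw [Set.Ioc_eq_empty (fun hlt => hpr hlt.le)]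
      simp [IntegrableOn]
  have hgoal : ∫ y in a..b, u y ^ 2 = ∫ s in Set.Ioc a b, U s ^ 2 := by
    rw [intervalIntegral.integral_of_le hab]
    exact setIntegral_congr_fun measurableSet_Ioc
      (fun s hs => by rw [huU s ⟨ha.trans hs.1.le, hs.2.trans hbH⟩])
  have hTeq : cM * Real.sqrt lam * (1 + 1 / cm) / (2 * d * ε * μ ^ 2)
      = M / (d * (ε * μ ^ 2)) := by
    rw [hM, ← htdef]
    field_simp
  rw [hgoal, hTeq]
  -- the main estimate in each of the two cases
  rcases hcase with hbα | hβa
  · -- layer below the well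
    have hbα' : b < α := by linarith
    have hGB : ε * μ ^ 2 * ∫ s in Set.Ioc (0:ℝ) b, U s ^ 2 ≤ U b * W b := by
      have hPb := hP' 0 b le_rfl hb0 hbH
      rw [hU0] at hPb
      have hdisj : Set.Ioo (0:ℝ) b ∩ Set.Ioo α β = ∅ := by
        rw [Set.eq_empty_iff_forall_notMem]
        rintro s ⟨⟨_, h1⟩, h2, _⟩; linarith
      have hmono : ∫ s in Set.Ioc (0:ℝ) b, ε * μ ^ 2 * U s ^ 2
          ≤ ∫ s in Set.Ioc (0:ℝ) b, (c s * g s ^ 2 + q s * U s ^ 2) := by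
        refine integral_mono_ae
          ((hU2I.mono_set (Set.Ioc_subset_Ioc le_rfl hbH)).const_mul _)
          (hFI.mono_set (Set.Ioc_subset_Ioc le_rfl hbH)) ?_
        filter_upwards [hq_ae 0 b le_rfl hbH hdisj, ae_restrict_mem measurableSet_Ioc]
          with s hqs hs
        have hcs := hcbd s ⟨hs.1.le, hs.2.trans hbH⟩
        have h1 : 0 ≤ c s * g s ^ 2 := mul_nonneg (le_trans hcm.le hcs.1) (sq_nonneg _)
        have h2 : ε * μ ^ 2 * U s ^ 2 ≤ q s * U s ^ 2 :=
          mul_le_mul_of_nonneg_right hqs (sq_nonneg _)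
        linarith
      rw [integral_const_mul] at hmono
      linarith
    have hGmono : ∀ z ∈ Set.Ioc b α, U b * W b ≤ U z * W z := by
      intro z hz
      have hPz := hP' b z hb0 hz.1.le (hz.2.trans hαH)
      have hdisj : Set.Ioo b z ∩ Set.Ioo α β = ∅ := by
        rw [Set.eq_empty_iff_forall_notMem]
        rintro s ⟨⟨_, h1⟩, h2, _⟩
        exact absurd (h1.trans_le hz.2) (not_lt.2 h2.le)
      have hnn : 0 ≤ ∫ s in Set.Ioc b z, (c s * g s ^ 2 + q s * U s ^ 2) := by
        refine integral_nonneg_of_ae ?_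
        filter_upwards [hq_ae b z hb0 (hz.2.trans hαH) hdisj,
          ae_restrict_mem measurableSet_Ioc] with s hqs hs
        have hcs := hcbd s ⟨hb0.trans hs.1.le, hs.2.trans (hz.2.trans hαH)⟩
        have h1 : 0 ≤ c s * g s ^ 2 := mul_nonneg (le_trans hcm.le hcs.1) (sq_nonneg _)
        have h2 : 0 ≤ q s * U s ^ 2 :=
          mul_nonneg (le_trans (mul_nonneg hε.le (sq_nonneg μ)) hqs) (sq_nonneg _)
        simp only [Pi.zero_apply]
        linarith
      linarith
    have hnn0 : 0 ≤ ∫ s in Set.Ioc (0:ℝ) b, U s ^ 2 :=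
      setIntegral_nonneg measurableSet_Ioc (fun s _ => sq_nonneg _)
    have hGb_nn : 0 ≤ U b * W b := le_trans (mul_nonneg hεμ.le hnn0) hGB
    have havg : (α - b) * (U b * W b) ≤ ∫ z in Set.Ioc b α, U z * W z := by
      have hconst : ∫ _z in Set.Ioc b α, (U b * W b) = (α - b) * (U b * W b) := by
        rw [setIntegral_const]
        simp [Real.volume_real_Ioc_of_le (by linarith : b ≤ α)]
      rw [← hconst]
      refine setIntegral_mono_on (integrableOn_const (hs := measure_Ioc_lt_top.ne))
        (hUWI hb0 hαH) measurableSet_Ioc (fun z hz => hGmono z hz)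
    have hUWabs : ∫ z in Set.Ioc b α, U z * W z ≤ M := by
      have e1 : ∫ z in Set.Ioc b α, U z * W z = ∫ z in Set.Ioc b α, c z * g z * U z := by
        refine integral_congr_ae ?_
        filter_upwards [haeq b α hb0 hαH, ae_restrict_mem measurableSet_Ioc] with z hvz hz
        have hzIcc : z ∈ Set.Icc (0:ℝ) H := ⟨hb0.trans hz.1.le, hz.2.trans hαH⟩
        rw [← hvW z hzIcc, hvz]
        ring
      have e2 : ∫ z in Set.Ioc b α, c z * g z * U z ≤ ∫ z in Set.Ioc b α, |c z * g z * U z| :=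
        integral_mono_ae (hcgUI.mono_set (Set.Ioc_subset_Ioc hb0 hαH))
          (habsI.mono_set (Set.Ioc_subset_Ioc hb0 hαH))
          (Eventually.of_forall fun z => le_abs_self _)
      have e3 : ∫ z in Set.Ioc b α, |c z * g z * U z|
          ≤ ∫ z in Set.Ioc (0:ℝ) H, |c z * g z * U z| := by
        refine setIntegral_mono_set habsI
          (Eventually.of_forall fun z => abs_nonneg _)
          (HasSubset.Subset.eventuallyLE (Set.Ioc_subset_Ioc hb0 hαH))
      linarith
    have hGb_le : U b * W b ≤ M / d := by
      rw [le_div_iff₀ hd]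
      have h1 : d * (U b * W b) ≤ (α - b) * (U b * W b) :=
        mul_le_mul_of_nonneg_right (by linarith) hGb_nn
      calc U b * W b * d = d * (U b * W b) := by ring
        _ ≤ (α - b) * (U b * W b) := h1
        _ ≤ ∫ z in Set.Ioc b α, U z * W z := havg
        _ ≤ M := hUWabs
    have hfinal : ∫ s in Set.Ioc (0:ℝ) b, U s ^ 2 ≤ M / (d * (ε * μ ^ 2)) := by
      have h2 : (ε * μ ^ 2 * ∫ s in Set.Ioc (0:ℝ) b, U s ^ 2) * d ≤ (M / d) * d :=
        mul_le_mul_of_nonneg_right (le_trans hGB hGb_le) hd.le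
      rw [div_mul_cancel₀ _ hd.ne'] at h2
      have h3 : (∫ s in Set.Ioc (0:ℝ) b, U s ^ 2) * (d * (ε * μ ^ 2))
          = (ε * μ ^ 2 * ∫ s in Set.Ioc (0:ℝ) b, U s ^ 2) * d := by ring
      rw [le_div_iff₀ (by positivity : (0:ℝ) < d * (ε * μ ^ 2)), h3]
      linarith
    have hsub : ∫ s in Set.Ioc a b, U s ^ 2 ≤ ∫ s in Set.Ioc (0:ℝ) b, U s ^ 2 :=
      setIntegral_mono_set (hU2I.mono_set (Set.Ioc_subset_Ioc le_rfl hbH))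
        (Eventually.of_forall fun s => sq_nonneg _)
        (HasSubset.Subset.eventuallyLE (Set.Ioc_subset_Ioc ha le_rfl))
    linarith
  · -- layer above the well
    have hβa' : β < a := by linarith
    have hβ0 : (0:ℝ) ≤ β := hα.trans hαβ.le
    have hGA : ε * μ ^ 2 * ∫ s in Set.Ioc a H, U s ^ 2 ≤ -(U a * W a) := by
      have hPa := hP' a H ha haH le_rfl
      rw [hUH] at hPa
      have hdisj : Set.Ioo a H ∩ Set.Ioo α β = ∅ := by
        rw [Set.eq_empty_iff_forall_notMem]
        rintro s ⟨⟨h1, _⟩, _, h2⟩; linarith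
      have hmono : ∫ s in Set.Ioc a H, ε * μ ^ 2 * U s ^ 2
          ≤ ∫ s in Set.Ioc a H, (c s * g s ^ 2 + q s * U s ^ 2) := by
        refine integral_mono_ae
          ((hU2I.mono_set (Set.Ioc_subset_Ioc ha le_rfl)).const_mul _)
          (hFI.mono_set (Set.Ioc_subset_Ioc ha le_rfl)) ?_
        filter_upwards [hq_ae a H ha le_rfl hdisj, ae_restrict_mem measurableSet_Ioc]
          with s hqs hs
        have hcs := hcbd s ⟨ha.trans hs.1.le, hs.2⟩
        have h1 : 0 ≤ c s * g s ^ 2 := mul_nonneg (le_trans hcm.le hcs.1) (sq_nonneg _)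
        have h2 : ε * μ ^ 2 * U s ^ 2 ≤ q s * U s ^ 2 :=
          mul_le_mul_of_nonneg_right hqs (sq_nonneg _)
        linarith
      rw [integral_const_mul] at hmono
      linarith
    have hGmono : ∀ z ∈ Set.Ioc β a, -(U a * W a) ≤ -(U z * W z) := by
      intro z hz
      have hPz := hP' z a (hβ0.trans hz.1.le) hz.2 haH
      have hdisj : Set.Ioo z a ∩ Set.Ioo α β = ∅ := by
        rw [Set.eq_empty_iff_forall_notMem]
        rintro s ⟨⟨h1, _⟩, _, h2⟩
        exact absurd (hz.1.trans h1) (not_lt.2 h2.le)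
      have hnn : 0 ≤ ∫ s in Set.Ioc z a, (c s * g s ^ 2 + q s * U s ^ 2) := by
        refine integral_nonneg_of_ae ?_
        filter_upwards [hq_ae z a (hβ0.trans hz.1.le) haH hdisj,
          ae_restrict_mem measurableSet_Ioc] with s hqs hs
        have hcs := hcbd s ⟨(hβ0.trans hz.1.le).trans hs.1.le, hs.2.trans haH⟩
        have h1 : 0 ≤ c s * g s ^ 2 := mul_nonneg (le_trans hcm.le hcs.1) (sq_nonneg _)
        have h2 : 0 ≤ q s * U s ^ 2 :=
          mul_nonneg (le_trans (mul_nonneg hε.le (sq_nonneg μ)) hqs) (sq_nonneg _)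
        simp only [Pi.zero_apply]
        linarith
      linarith
    have hnn0 : 0 ≤ ∫ s in Set.Ioc a H, U s ^ 2 :=
      setIntegral_nonneg measurableSet_Ioc (fun s _ => sq_nonneg _)
    have hGa_nn : 0 ≤ -(U a * W a) := le_trans (mul_nonneg hεμ.le hnn0) hGA
    have havg : (a - β) * (-(U a * W a)) ≤ ∫ z in Set.Ioc β a, -(U z * W z) := by
      have hconst : ∫ _z in Set.Ioc β a, (-(U a * W a)) = (a - β) * (-(U a * W a)) := by
        rw [setIntegral_const]
        simp [Real.volume_real_Ioc_of_le (by linarith : β ≤ a)]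
      rw [← hconst]
      refine setIntegral_mono_on (integrableOn_const (hs := measure_Ioc_lt_top.ne))
        (hUWI hβ0 haH).neg measurableSet_Ioc (fun z hz => hGmono z hz)
    have hUWabs : ∫ z in Set.Ioc β a, -(U z * W z) ≤ M := by
      have e1 : ∫ z in Set.Ioc β a, -(U z * W z) = ∫ z in Set.Ioc β a, -(c z * g z * U z) := by
        refine integral_congr_ae ?_
        filter_upwards [haeq β a hβ0 haH, ae_restrict_mem measurableSet_Ioc] with z hvz hz
        have hzIcc : z ∈ Set.Icc (0:ℝ) H := ⟨hβ0.trans hz.1.le, hz.2.trans haH⟩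
        rw [← hvW z hzIcc, hvz]
        ring
      have e2 : ∫ z in Set.Ioc β a, -(c z * g z * U z)
          ≤ ∫ z in Set.Ioc β a, |c z * g z * U z| :=
        integral_mono_ae (hcgUI.mono_set (Set.Ioc_subset_Ioc hβ0 haH)).neg
          (habsI.mono_set (Set.Ioc_subset_Ioc hβ0 haH))
          (Eventually.of_forall fun z => neg_le_abs _)
      have e3 : ∫ z in Set.Ioc β a, |c z * g z * U z|
          ≤ ∫ z in Set.Ioc (0:ℝ) H, |c z * g z * U z| := by
        refine setIntegral_mono_set habsI
          (Eventually.of_forall fun z => abs_nonneg _)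
          (HasSubset.Subset.eventuallyLE (Set.Ioc_subset_Ioc hβ0 haH))
      linarith
    have hGa_le : -(U a * W a) ≤ M / d := by
      rw [le_div_iff₀ hd]
      have h1 : d * (-(U a * W a)) ≤ (a - β) * (-(U a * W a)) :=
        mul_le_mul_of_nonneg_right (by linarith) hGa_nn
      calc -(U a * W a) * d = d * (-(U a * W a)) := by ring
        _ ≤ (a - β) * (-(U a * W a)) := h1
        _ ≤ ∫ z in Set.Ioc β a, -(U z * W z) := havg
        _ ≤ M := hUWabs
    have hfinal : ∫ s in Set.Ioc a H, U s ^ 2 ≤ M / (d * (ε * μ ^ 2)) := by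
      have h2 : (ε * μ ^ 2 * ∫ s in Set.Ioc a H, U s ^ 2) * d ≤ (M / d) * d :=
        mul_le_mul_of_nonneg_right (le_trans hGA hGa_le) hd.le
      rw [div_mul_cancel₀ _ hd.ne'] at h2
      have h3 : (∫ s in Set.Ioc a H, U s ^ 2) * (d * (ε * μ ^ 2))
          = (ε * μ ^ 2 * ∫ s in Set.Ioc a H, U s ^ 2) * d := by ring
      rw [le_div_iff₀ (by positivity : (0:ℝ) < d * (ε * μ ^ 2)), h3]
      linarith
    have hsub : ∫ s in Set.Ioc a b, U s ^ 2 ≤ ∫ s in Set.Ioc a H, U s ^ 2 :=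
      setIntegral_mono_set (hU2I.mono_set (Set.Ioc_subset_Ioc ha le_rfl))
        (Eventually.of_forall fun s => sq_nonneg _)
        (HasSubset.Subset.eventuallyLE (Set.Ioc_subset_Ioc le_rfl hbH))
    linarith

/-- concentration in a well — the mass in any closed layer disjoint
from the well tends to zero along a sequence of guided eigenfunctions. -/
theorem stmt3 (cm cM H : ℝ) (hcm : 0 < cm) (hcmM : cm < cM) (hH : 0 < H)
    (c : ℝ → ℝ) (hc : IsCoeff H cm cM c)
    (α β c₁ : ℝ) (hα : 0 ≤ α) (hαβ : α < β) (hβ : β < H)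
    (hc₁ : cm < c₁) (hc₁' : c₁ ≤ cM)
    (hwell : ∀ᵐ y ∂volume.restrict (Set.Ioo 0 H \ Set.Ioo α β), c₁ ≤ c y)
    (ε : ℝ) (hε : 0 < ε)
    (μ lam : ℕ → ℝ) (hμ : ∀ n, 0 < μ n)
    (hlow : ∀ n, cm * μ n ^ 2 ≤ lam n)
    (hhigh : ∀ n, lam n ≤ (c₁ - ε) * μ n ^ 2)
    (hto : Tendsto lam atTop atTop)
    (u v g : ℕ → ℝ → ℝ)
    (hsol : ∀ n, IsReducedSolutionOn 0 H c (μ n) (lam n) (u n) (v n) (g n))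
    (hu0 : ∀ n, u n 0 = 0) (huH : ∀ n, u n H = 0)
    (hnorm : ∀ n, (∫ y in (0:ℝ)..H, u n y ^ 2) = 1) :
    ∀ a b : ℝ, 0 ≤ a → a ≤ b → b ≤ H → Disjoint (Set.Icc a b) (Set.Icc α β) →
      Tendsto (fun n => ∫ y in a..b, u n y ^ 2) atTop (𝓝 0) := by

  intro a b ha hab hbH hdisj
  -- choose the gap d between the layer and the well
  obtain ⟨d, hd0, hdc⟩ : ∃ d : ℝ, 0 < d ∧ (b + d ≤ α ∨ β + d ≤ a) := by
    have hcase : b < α ∨ β < a := by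
      by_contra hcon
      push_neg at hcon
      obtain ⟨h1, h2⟩ := hcon
      have hmem : max a α ∈ Set.Icc a b ∩ Set.Icc α β :=
        ⟨⟨le_max_left _ _, max_le hab h1⟩, ⟨le_max_right _ _, max_le h2 hαβ.le⟩⟩
      rw [Set.disjoint_iff_inter_eq_empty] at hdisj
      rw [hdisj] at hmem
      exact hmem
    rcases hcase with h | h
    · exact ⟨α - b, by linarith, Or.inl (by linarith)⟩
    · exact ⟨a - β, by linarith, Or.inr (by linarith)⟩
  have hbound : ∀ n, ∫ y in a..b, u n y ^ 2
      ≤ cM * Real.sqrt (lam n) * (1 + 1 / cm) / (2 * d * ε * μ n ^ 2) := fun n =>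
    key_bound cm cM H hcm hH c hc α β c₁ hα hαβ hβ hwell ε hε (μ n) (lam n) (hμ n)
      (hlow n) (hhigh n) (u n) (v n) (g n) (hsol n) (hu0 n) (huH n) (hnorm n)
      a b d ha hab hbH hd0 hdc
  have hnonneg : ∀ n, 0 ≤ ∫ y in a..b, u n y ^ 2 := fun n =>
    intervalIntegral.integral_nonneg hab (fun y _ => sq_nonneg _)
  -- a dominating sequence C / √(lam n)
  have hc1ε : 0 < c₁ - ε := by
    have h0 := (hlow 0).trans (hhigh 0)
    have h1 : 0 < μ 0 ^ 2 := pow_pos (hμ 0) 2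
    nlinarith
  have hcM0 : 0 < cM := hcm.trans hcmM
  have hinv : 0 < 1 + 1 / cm := by
    have := one_div_pos.2 hcm; linarith
  set C := cM * (1 + 1 / cm) * (c₁ - ε) / (2 * d * ε) with hC
  have hdom : ∀ n, cM * Real.sqrt (lam n) * (1 + 1 / cm) / (2 * d * ε * μ n ^ 2)
      ≤ C / Real.sqrt (lam n) := by
    intro n
    have hlamn : 0 < lam n := lt_of_lt_of_le (mul_pos hcm (pow_pos (hμ n) 2)) (hlow n)
    have hs : 0 < Real.sqrt (lam n) := Real.sqrt_pos.2 hlamn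
    have hden : 0 < 2 * d * ε * μ n ^ 2 :=
      mul_pos (mul_pos (mul_pos two_pos hd0) hε) (pow_pos (hμ n) 2)
    rw [div_le_div_iff₀ hden hs]
    have hss : Real.sqrt (lam n) * Real.sqrt (lam n) = lam n := Real.mul_self_sqrt hlamn.le
    have hre : C * (2 * d * ε * μ n ^ 2) = cM * (1 + 1 / cm) * ((c₁ - ε) * μ n ^ 2) := by
      rw [hC]
      field_simp
    have hle : cM * Real.sqrt (lam n) * (1 + 1 / cm) * Real.sqrt (lam n)
        = cM * (1 + 1 / cm) * lam n := by
      linear_combination (cM * (1 + 1 / cm)) * hss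
    have key : cM * (1 + 1 / cm) * lam n ≤ cM * (1 + 1 / cm) * ((c₁ - ε) * μ n ^ 2) :=
      mul_le_mul_of_nonneg_left (hhigh n) (by positivity)
    linarith
  have hs1 : Tendsto Real.sqrt atTop atTop := by
    refine tendsto_atTop_atTop.2 fun bb => ⟨bb ^ 2, fun x hx => ?_⟩
    calc bb ≤ |bb| := le_abs_self _
      _ = Real.sqrt (bb ^ 2) := (Real.sqrt_sq_eq_abs bb).symm
      _ ≤ Real.sqrt x := Real.sqrt_le_sqrt hx
  have hsqrt : Tendsto (fun n => Real.sqrt (lam n)) atTop atTop := hs1.comp hto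
  have hlim : Tendsto (fun n => C / Real.sqrt (lam n)) atTop (𝓝 0) :=
    Tendsto.div_atTop tendsto_const_nhds hsqrt
  exact squeeze_zero hnonneg (fun n => (hbound n).trans (hdom n)) hlim
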